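/- Let ζ : X → D* be a Gel'fand distribution basis, A : D → D a continuous linear operator on D with formal adjoint A† : D → D, and set ω_x := (A†)× ζ_x, where (A†)× : D* → D* is the adjoint of A†. Then ω is a Bessel distribution map with ∫_X |⟨f,ω_x⟩|²dμ = ‖A†f‖² for f ∈ D, and it is atomic for A: ⟨Af,g⟩ = ∫_X ⟨f,ζ_x⟩⟨ω_x,g⟩dμ for all f,g ∈ D. -/

import Mathlib

open MeasureTheory ComplexConjugate

/-- For a Gel'fand distribution basis `ζ`, a continuous operator `A : D → D`
with formal adjoint `A† : D → D`, the map `ω_x := (A†)× ζ_x` (i.e. `ω_x = ζ_x ∘ A†`) is a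
Bessel distribution map with `∫|⟨f,ω_x⟩|²dμ = ‖A†f‖²`, and is atomic for `A`:
`⟨Af,g⟩ = ∫ ⟨f,ζ_x⟩⟨ω_x,g⟩dμ` for all `f,g ∈ D`. -/
theorem stmt17
    {D : Type*} [AddCommGroup D] [Module ℂ D] [TopologicalSpace D] [IsTopologicalAddGroup D]
    [ContinuousSMul ℂ D]
    {H : Type*} [NormedAddCommGroup H] [InnerProductSpace ℂ H] [CompleteSpace H]
    (j : D →L[ℂ] H) (hj : Function.Injective j) (hjd : DenseRange j)
    {X : Type*} [MeasurableSpace X] (μ : Measure X) [SigmaFinite μ]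
    (ζ : X → (D →SL[starRingEnd ℂ] ℂ))
    (hmeas : ∀ f : D, Measurable fun x => (ζ x) f)
    (hL2 : ∀ f : D, MemLp (fun x => (ζ x) f) 2 μ)
    (hPars : ∀ f : D, ∫ x, ‖(ζ x) f‖ ^ 2 ∂μ = ‖j f‖ ^ 2)
    (hIndep : ∀ ξ : X → ℂ, AEMeasurable ξ μ →
      (∀ g : D, Integrable (fun x => ξ x * conj ((ζ x) g)) μ) →
      (∀ g : D, ∫ x, ξ x * conj ((ζ x) g) ∂μ = 0) → ξ =ᵐ[μ] 0)
    (A Adag : D →L[ℂ] D)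
    (hadj : ∀ f g : D, (inner ℂ (j g) (j (A f)) : ℂ) = (inner ℂ (j (Adag g)) (j f) : ℂ))
    (ω : X → (D →SL[starRingEnd ℂ] ℂ))
    (hω : ∀ (x : X) (g : D), (ω x) g = (ζ x) (Adag g)) :
    (∀ f : D, MemLp (fun x => (ω x) f) 2 μ ∧
      ∫ x, ‖(ω x) f‖ ^ 2 ∂μ = ‖j (Adag f)‖ ^ 2) ∧
    (∀ f g : D, (inner ℂ (j g) (j (A f)) : ℂ) = ∫ x, conj ((ζ x) f) * (ω x) g ∂μ) := by
  -- integrability of the squared norms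
  have hint : ∀ v : D, Integrable (fun x => ((‖(ζ x) v‖ ^ 2 : ℝ) : ℂ)) μ := fun v =>
    ((hL2 v).norm.integrable_sq).ofReal
  have hIval : ∀ v : D, ∫ x, ((‖(ζ x) v‖ ^ 2 : ℝ) : ℂ) ∂μ = ((‖j v‖ ^ 2 : ℝ) : ℂ) := by
    intro v
    rw [← hPars v]
    exact integral_ofReal
  -- key polarization identity
  have key : ∀ f h : D, ∫ x, conj ((ζ x) f) * (ζ x) h ∂μ = (inner ℂ (j h) (j f) : ℂ) := by
    intro f h
    have hpt : ∀ x : X, conj ((ζ x) f) * (ζ x) h =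
        (((‖(ζ x) (f + h)‖ ^ 2 : ℝ) : ℂ) - ((‖(ζ x) (f - h)‖ ^ 2 : ℝ) : ℂ) +
          (((‖(ζ x) (f + Complex.I • h)‖ ^ 2 : ℝ) : ℂ) -
            ((‖(ζ x) (f - Complex.I • h)‖ ^ 2 : ℝ) : ℂ)) * Complex.I) / 4 := by
      intro x
      have e1 : (ζ x) (f + h) = (ζ x) f + (ζ x) h := map_add _ _ _
      have e2 : (ζ x) (f - h) = (ζ x) f - (ζ x) h := map_sub _ _ _
      have e3 : (ζ x) (f + Complex.I • h) = (ζ x) f - Complex.I * (ζ x) h := by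
        rw [map_add, map_smulₛₗ]; simp [Complex.conj_I]; try ring
      have e4 : (ζ x) (f - Complex.I • h) = (ζ x) f + Complex.I * (ζ x) h := by
        rw [map_sub, map_smulₛₗ]; simp [Complex.conj_I]; try ring
      have := inner_eq_sum_norm_sq_div_four (𝕜 := ℂ) ((ζ x) f) ((ζ x) h)
      rw [RCLike.inner_apply] at this
      rw [e1, e2, e3, e4]
      rw [mul_comm]
      simpa [smul_eq_mul, RCLike.I_to_complex] using this
    calc ∫ x, conj ((ζ x) f) * (ζ x) h ∂μ
        = ∫ x, (((‖(ζ x) (f + h)‖ ^ 2 : ℝ) : ℂ) - ((‖(ζ x) (f - h)‖ ^ 2 : ℝ) : ℂ) +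
            (((‖(ζ x) (f + Complex.I • h)‖ ^ 2 : ℝ) : ℂ) -
              ((‖(ζ x) (f - Complex.I • h)‖ ^ 2 : ℝ) : ℂ)) * Complex.I) / 4 ∂μ := by
          exact integral_congr_ae (Filter.Eventually.of_forall hpt)
      _ = (((‖j (f + h)‖ ^ 2 : ℝ) : ℂ) - ((‖j (f - h)‖ ^ 2 : ℝ) : ℂ) +
            (((‖j (f + Complex.I • h)‖ ^ 2 : ℝ) : ℂ) -
              ((‖j (f - Complex.I • h)‖ ^ 2 : ℝ) : ℂ)) * Complex.I) / 4 := by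
          have I1 : Integrable (fun x => ((‖(ζ x) (f + h)‖ ^ 2 : ℝ) : ℂ) -
              ((‖(ζ x) (f - h)‖ ^ 2 : ℝ) : ℂ)) μ := (hint _).sub (hint _)
          have I2 : Integrable (fun x => (((‖(ζ x) (f + Complex.I • h)‖ ^ 2 : ℝ) : ℂ) -
              ((‖(ζ x) (f - Complex.I • h)‖ ^ 2 : ℝ) : ℂ)) * Complex.I) μ :=
            ((hint _).sub (hint _)).mul_const _
          rw [integral_div, integral_add I1 I2,
            integral_sub (hint _) (hint _), integral_mul_const,
            integral_sub (hint _) (hint _), hIval, hIval, hIval, hIval]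
      _ = (inner ℂ (j h) (j f) : ℂ) := by
          have := inner_eq_sum_norm_sq_div_four (𝕜 := ℂ) (j h) (j f)
          have n1 : ‖j (f + h)‖ = ‖j h + j f‖ := by rw [map_add, add_comm]
          have n2 : ‖j (f - h)‖ = ‖j h - j f‖ := by rw [map_sub, norm_sub_rev]
          have n3 : ‖j (f + Complex.I • h)‖ = ‖j h - Complex.I • j f‖ := by
            have : j h - Complex.I • j f = (-Complex.I) • (j f + Complex.I • j h) := by
              simp [smul_smul, smul_add, Complex.I_mul_I]; module
            rw [this, norm_smul, map_add, j.map_smul]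
            simp
          have n4 : ‖j (f - Complex.I • h)‖ = ‖j h + Complex.I • j f‖ := by
            have : j h + Complex.I • j f = Complex.I • (j f - Complex.I • j h) := by
              simp [smul_smul, smul_sub, Complex.I_mul_I]; module
            rw [this, norm_smul, map_sub, j.map_smul]
            simp
          rw [n1, n2, n3, n4, this]
          push_cast
          simp [RCLike.I_to_complex]
  refine ⟨fun f => ?_, fun f g => ?_⟩
  · have hfe : (fun x => (ω x) f) = fun x => (ζ x) (Adag f) := funext fun x => hω x f
    constructor
    · rw [hfe]; exact hL2 (Adag f)
    · simp only [hω]; exact hPars (Adag f)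
  · have : ∫ x, conj ((ζ x) f) * (ω x) g ∂μ = ∫ x, conj ((ζ x) f) * (ζ x) (Adag g) ∂μ := by
      simp only [hω]
    rw [this, key f (Adag g), hadj]
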